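/- Fix an integer k ≥ 2 and let W be a k × k row-stochastic, strictly positive, invertible matrix with image simplex Δ* ⊂ ℝ^k. Let ℓ = k − 1, |R| = k(k−1) (equal to 2·C(k,2)), and λ = μ_H^{k−1}(Δ*)/μ_H^{k−1}(Δ), the ratio of (k−1)-dimensional Hausdorff measures of Δ* and the full probability simplex Δ. Fix ε ∈ (0,1). Then there exist a constant θ ∈ ℝ and N₀ ∈ ℕ such that for every n ≥ N₀ there exist an integer M ≥ 1, probability vectors P₁,…,P_M ∈ Δ*, and a decoder g : (Fin k)^n → {1,…,M} with average error probability (1/M)·∑_{m=1}^M ℙ_{Y ∼ P_m^{⊗n}}[ g(Y) ≠ m ] ≤ ε and log₂ M ≥ ℓ·log₂( √n / (−ℓ·Φ⁻¹(ε/|R|)) ) + log₂ λ + θ. -/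

import Mathlib

open MeasureTheory Finset Matrix

/-- Probability of the event `E ⊆ (Fin k)^n` under the `n`-fold product measure whose
coordinates are i.i.d. with common distribution `P` on `Fin k`. -/
noncomputable def prodProb {k : ℕ} (P : Fin k → ℝ) (n : ℕ) (E : Set (Fin n → Fin k)) : ℝ :=
  ∑ y : Fin n → Fin k, E.indicator (fun y => ∏ i, P (y i)) y

/-- The cumulative distribution function of the standard normal distribution. -/
noncomputable def stdNormalCDF (x : ℝ) : ℝ :=
  ∫ t in Set.Iic x, (Real.sqrt (2 * Real.pi))⁻¹ * Real.exp (-t ^ 2 / 2)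

/-- The inverse of the standard normal CDF. -/
noncomputable def stdNormalCDFInv : ℝ → ℝ :=
  Function.invFun stdNormalCDF

lemma sum_prod_eq {n k : ℕ} (F : Fin n → Fin k → ℝ) :
    ∑ s : Fin n → Fin k, ∏ i, F i (s i) = ∏ i, ∑ a, F i a := by
  rw [Finset.prod_univ_sum]; simp

lemma variance_eq {n k : ℕ} (P : Fin k → ℝ) (hP1 : ∑ a, P a = 1) (x : Fin k) :
    ∑ s : Fin n → Fin k, (∏ i, P (s i)) *
        (∑ i, ((if s i = x then (1:ℝ) else 0) - P x)) ^ 2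
      = n * (P x * (1 - P x)) := by
  classical
  set p := P x with hp
  set c : Fin k → ℝ := fun a => (if a = x then (1:ℝ) else 0) - p with hc
  have hc0 : ∑ a, P a * c a = 0 := by
    simp only [hc, mul_sub, Finset.sum_sub_distrib, mul_ite, mul_one, mul_zero]
    simp [Finset.sum_ite_eq', ← Finset.sum_mul, hP1, hp]
  have hc2 : ∑ a, P a * (c a * c a) = p * (1 - p) := by
    have : ∀ a, P a * (c a * c a) = P a * (if a = x then (1:ℝ) else 0) * (1 - 2*p) + P a * p^2 := by
      intro a; by_cases h : a = x
      · simp only [hc, h, eq_self_iff_true, if_true]; ring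
      · simp only [hc, if_neg h]; ring
    rw [Finset.sum_congr rfl (fun a _ => this a)]
    rw [Finset.sum_add_distrib, ← Finset.sum_mul]
    simp [mul_ite, Finset.sum_ite_eq', ← Finset.sum_mul, hP1]
    ring
  calc ∑ s : Fin n → Fin k, (∏ i, P (s i)) * (∑ i, c (s i)) ^ 2
      = ∑ s : Fin n → Fin k, ∑ i, ∑ j, (∏ t, P (s t)) * (c (s i) * c (s j)) := by
        apply Finset.sum_congr rfl; intro s _
        rw [sq, Finset.sum_mul_sum]
        rw [Finset.mul_sum]; apply Finset.sum_congr rfl; intro i _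
        rw [Finset.mul_sum]
    _ = ∑ i : Fin n, ∑ j : Fin n, ∑ s : Fin n → Fin k, (∏ t, P (s t)) * (c (s i) * c (s j)) := by
        rw [Finset.sum_comm]; apply Finset.sum_congr rfl; intro i _; rw [Finset.sum_comm]
    _ = ∑ i : Fin n, ∑ j : Fin n, if i = j then p * (1-p) else 0 := by
        apply Finset.sum_congr rfl; intro i _; apply Finset.sum_congr rfl; intro j _
        have key : ∀ s : Fin n → Fin k, (∏ t, P (s t)) * (c (s i) * c (s j))
            = ∏ t, (P (s t) * ((if t = i then c (s t) else 1) * (if t = j then c (s t) else 1))) := by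
          intro s
          rw [Finset.prod_mul_distrib, Finset.prod_mul_distrib]
          rw [Finset.prod_ite_eq' univ i (fun t => c (s t)), Finset.prod_ite_eq' univ j (fun t => c (s t))]
          simp
        rw [Finset.sum_congr rfl (fun s _ => key s)]
        rw [sum_prod_eq (fun t a => P a * ((if t = i then c a else 1) * (if t = j then c a else 1)))]
        by_cases hij : i = j
        · subst hij
          rw [Finset.prod_eq_single i]
          · simp [hc2]
          · intro t _ ht; simp [ht, mul_one, hP1]
          · simp
        · rw [Finset.prod_eq_zero (Finset.mem_univ i)]
          · simp [hij]
          · simp only [if_pos rfl, if_neg hij, mul_one]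
            exact hc0
    _ = n * (p * (1 - p)) := by simp [Finset.sum_ite_eq', mul_comm]


lemma prodProb_mono {k n : ℕ} (P : Fin k → ℝ) (hP0 : ∀ a, 0 ≤ P a)
    {E F : Set (Fin n → Fin k)} (h : E ⊆ F) : prodProb P n E ≤ prodProb P n F :=
  Finset.sum_le_sum fun s _ =>
    Set.indicator_le_indicator_of_subset h (fun y => Finset.prod_nonneg fun i _ => hP0 (y i)) s

lemma prodProb_iUnion_le {k n m : ℕ} (P : Fin k → ℝ) (hP0 : ∀ a, 0 ≤ P a)
    (E : Fin m → Set (Fin n → Fin k)) :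
    prodProb P n (⋃ j, E j) ≤ ∑ j, prodProb P n (E j) := by
  unfold prodProb
  rw [Finset.sum_comm]
  apply Finset.sum_le_sum
  intro s _
  have hf : 0 ≤ ∏ i, P (s i) := Finset.prod_nonneg fun i _ => hP0 (s i)
  by_cases hs : s ∈ ⋃ j, E j
  · obtain ⟨j, hj⟩ := Set.mem_iUnion.mp hs
    rw [Set.indicator_of_mem hs]
    calc (∏ i, P (s i)) = (E j).indicator (fun y => ∏ i, P (y i)) s := by
          rw [Set.indicator_of_mem hj]
      _ ≤ ∑ j, (E j).indicator (fun y => ∏ i, P (y i)) s :=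
          Finset.single_le_sum (fun j _ => Set.indicator_nonneg (fun y _ => Finset.prod_nonneg fun i _ => hP0 (y i)) s) (Finset.mem_univ j)
  · rw [Set.indicator_of_notMem hs]
    exact Finset.sum_nonneg fun j _ => Set.indicator_nonneg (fun y _ => Finset.prod_nonneg fun i _ => hP0 (y i)) s

lemma chebyshev {n k : ℕ} (hn : 0 < n) (P : Fin k → ℝ) (hP0 : ∀ a, 0 ≤ P a)
    (hP1 : ∑ a, P a = 1) (x : Fin k) (t : ℝ) (ht : 0 < t) :
    prodProb P n {s | t ≤ |(∑ i, if s i = x then (1:ℝ) else 0) / n - P x|}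
      ≤ 1 / (4 * n * t ^ 2) := by
  have hnR : (0:ℝ) < n := by exact_mod_cast hn
  have key : ∀ s : Fin n → Fin k,
      ({s | t ≤ |(∑ i, if s i = x then (1:ℝ) else 0) / n - P x|} :
        Set (Fin n → Fin k)).indicator (fun y => ∏ i, P (y i)) s
      ≤ (∏ i, P (s i)) * ((∑ i, ((if s i = x then (1:ℝ) else 0) - P x)) ^ 2 / (n*t)^2) := by
    intro s
    have hf : 0 ≤ ∏ i, P (s i) := Finset.prod_nonneg fun i _ => hP0 (s i)
    by_cases hs : s ∈ {s | t ≤ |(∑ i, if s i = x then (1:ℝ) else 0) / n - P x|}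
    · rw [Set.indicator_of_mem hs]
      have hsum : (∑ i, ((if s i = x then (1:ℝ) else 0) - P x))
          = (∑ i, if s i = x then (1:ℝ) else 0) - n * P x := by
        rw [Finset.sum_sub_distrib]; simp [Finset.card_univ, mul_comm]
      have h1 : n * t ≤ |(∑ i, ((if s i = x then (1:ℝ) else 0) - P x))| := by
        rw [hsum]
        have : t ≤ |(∑ i, if s i = x then (1:ℝ) else 0) - n * P x| / n := by
          have := hs
          simp only [Set.mem_setOf_eq] at this
          rwa [div_sub' (ne_of_gt hnR), abs_div, abs_of_pos hnR] at this
        calc (n:ℝ) * t ≤ n * (|(∑ i, if s i = x then (1:ℝ) else 0) - n * P x| / n) := by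
              apply mul_le_mul_of_nonneg_left this (le_of_lt hnR)
          _ = _ := by field_simp
      have h2 : (1:ℝ) ≤ (∑ i, ((if s i = x then (1:ℝ) else 0) - P x)) ^ 2 / (n*t)^2 := by
        rw [le_div_iff₀ (by positivity)]
        have := sq_abs ((∑ i, ((if s i = x then (1:ℝ) else 0) - P x)))
        nlinarith [mul_pos hnR ht]
      exact le_mul_of_one_le_right hf h2
    · rw [Set.indicator_of_notMem hs]
      positivity
  calc prodProb P n _ ≤ ∑ s : Fin n → Fin k, (∏ i, P (s i)) * ((∑ i, ((if s i = x then (1:ℝ) else 0) - P x)) ^ 2 / (n*t)^2) :=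
        Finset.sum_le_sum fun s _ => key s
    _ = (∑ s : Fin n → Fin k, (∏ i, P (s i)) * (∑ i, ((if s i = x then (1:ℝ) else 0) - P x)) ^ 2) / (n*t)^2 := by
        rw [Finset.sum_div]; apply Finset.sum_congr rfl; intro s _; ring
    _ = (n * (P x * (1 - P x))) / (n*t)^2 := by rw [variance_eq P hP1 x]
    _ ≤ (n * (1/4)) / (n*t)^2 := by
        apply div_le_div_of_nonneg_right ?_ (by positivity)
        have : P x * (1 - P x) ≤ 1/4 := by nlinarith [sq_nonneg (P x - 1/2)]
        nlinarith
    _ = 1 / (4 * n * t ^ 2) := by field_simp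


set_option maxHeartbeats 2000000 in
/-- Gaussian approximation of the achievable code size for noisy
permutation channels with a strictly positive, row-stochastic, invertible matrix `W`:
with `ℓ = k−1`, `|R| = k(k−1)` and `λ` the Hausdorff volume ratio of `Δ*` and `Δ`,
there are `θ ∈ ℝ` and `N₀` such that for all `n ≥ N₀` some code of size `M` with
marginals in `Δ*` has average error at most `ε` and
`log₂ M ≥ ℓ·log₂(√n/(−ℓ·Φ⁻¹(ε/|R|))) + log₂ λ + θ`. -/
theorem gaussian_approximation_dmc (k : ℕ) (hk : 2 ≤ k)
    (W : Matrix (Fin k) (Fin k) ℝ)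
    (hpos : ∀ x y, 0 < W x y) (hrow : ∀ x, ∑ y, W x y = 1) (hinv : W.det ≠ 0)
    (Δ : Set (EuclideanSpace ℝ (Fin k)))
    (hΔ : Δ = {f | (∀ i, 0 ≤ f i) ∧ ∑ i, f i = 1})
    (Δs : Set (EuclideanSpace ℝ (Fin k)))
    (hΔs : Δs = {f | ∃ p ∈ Δ, ∀ y, f y = ∑ x, p x * W x y})
    (lam : ℝ)
    (hlam : lam = (μH[(k : ℝ) - 1] Δs).toReal / (μH[(k : ℝ) - 1] Δ).toReal)
    (ε : ℝ) (hε0 : 0 < ε) (hε1 : ε < 1) :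
    ∃ θ : ℝ, ∃ N₀ : ℕ, ∀ n : ℕ, N₀ ≤ n →
      ∃ M : ℕ, 1 ≤ M ∧ ∃ P : Fin M → EuclideanSpace ℝ (Fin k),
        (∀ m, P m ∈ Δs) ∧
        ∃ g : (Fin n → Fin k) → Fin M,
          (1 / (M : ℝ)) * ∑ m : Fin M, prodProb (P m) n {y | g y ≠ m} ≤ ε ∧
          ((k : ℝ) - 1) * Real.logb 2 (Real.sqrt n
              / (-((k : ℝ) - 1) * stdNormalCDFInv (ε / ((k : ℝ) * ((k : ℝ) - 1)))))
            + Real.logb 2 lam + θ ≤ Real.logb 2 M := by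
  classical
  obtain ⟨ℓ, rfl⟩ : ∃ ℓ, k = ℓ + 1 := ⟨k - 1, by omega⟩
  have hℓ1 : 1 ≤ ℓ := by omega
  set kR : ℝ := ((ℓ + 1 : ℕ) : ℝ) with hkR
  have hkR1 : kR = (ℓ : ℝ) + 1 := by rw [hkR]; push_cast; ring
  have hkRpos : 0 < kR := by rw [hkR1]; positivity
  have hkRge1 : 1 ≤ kR := by rw [hkR1]; linarith [Nat.cast_nonneg (α := ℝ) ℓ]
  have hU : IsUnit W.det := isUnit_iff_ne_zero.mpr hinv
  set V := W⁻¹ with hV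
  have hWV : W * V = 1 := Matrix.mul_nonsing_inv W hU
  have hVW : V * W = 1 := Matrix.nonsing_inv_mul W hU
  have hVrow : ∀ y, ∑ x, V y x = 1 := by
    intro y
    have h1 : W.mulVec (fun _ => (1 : ℝ)) = fun _ => 1 := by
      funext z; simp [Matrix.mulVec, dotProduct, hrow z]
    have h2 : V.mulVec (fun _ => (1 : ℝ)) = fun _ => 1 := by
      calc V.mulVec (fun _ => (1 : ℝ)) = V.mulVec (W.mulVec fun _ => 1) := by rw [h1]
        _ = (V * W).mulVec (fun _ => 1) := Matrix.mulVec_mulVec _ _ _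
        _ = fun _ => 1 := by rw [hVW, Matrix.one_mulVec]
    have h3 := congrFun h2 y
    simpa [Matrix.mulVec, dotProduct] using h3
  set B : ℝ := 1 + ∑ y, ∑ x, |V y x| with hB
  have hBpos : 0 < B := by
    rw [hB]
    have : 0 ≤ ∑ y, ∑ x, |V y x| :=
      Finset.sum_nonneg fun y _ => Finset.sum_nonneg fun x _ => abs_nonneg _
    linarith
  have hVcol : ∀ x, ∑ y, |V y x| ≤ B := by
    intro x; rw [hB]
    have h1 : ∑ y, |V y x| ≤ ∑ y, ∑ x', |V y x'| :=
      Finset.sum_le_sum fun y _ =>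
        Finset.single_le_sum (f := fun x' => |V y x'|) (fun x' _ => abs_nonneg _) (Finset.mem_univ x)
    linarith
  set ρ : ℝ := 1 / (kR * B) with hρ
  have hρpos : 0 < ρ := by rw [hρ]; positivity
  set δ : ℝ := Real.sqrt (kR / ε) with hδ
  have hδpos : 0 < δ := Real.sqrt_pos.mpr (by positivity)
  have hδsq : δ ^ 2 = kR / ε := Real.sq_sqrt (by positivity)
  set cInv := stdNormalCDFInv (ε / (kR * (kR - 1))) with hcInv
  set cval : ℝ := -(kR - 1) * cInv with hcval
  set θ : ℝ := if cval = 0 then -Real.logb 2 lam else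
      (ℓ : ℝ) * Real.logb 2 cval - Real.logb 2 lam
        + (ℓ : ℝ) * Real.logb 2 (ρ / (2 * kR * δ)) with hθ
  refine ⟨θ, max 1 (⌈(kR * δ / ρ) ^ 2⌉₊ + 1), ?_⟩
  intro n hn
  have hn1 : 1 ≤ n := le_trans (le_max_left _ _) hn
  have hnR : (0 : ℝ) < n := by exact_mod_cast Nat.lt_of_lt_of_le Nat.zero_lt_one hn1
  have hsq : (0 : ℝ) < Real.sqrt n := Real.sqrt_pos.mpr hnR
  have hxge : 1 ≤ ρ * Real.sqrt n / (kR * δ) := by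
    have h2 : (⌈(kR * δ / ρ) ^ 2⌉₊ + 1 : ℕ) ≤ n := le_trans (le_max_right _ _) hn
    have h3 : ((⌈(kR * δ / ρ) ^ 2⌉₊ : ℝ)) ≤ n := by exact_mod_cast le_trans (Nat.le_succ _) h2
    have h1 : (kR * δ / ρ) ^ 2 ≤ (n : ℝ) := le_trans (Nat.le_ceil _) h3
    have h4 : kR * δ / ρ ≤ Real.sqrt n := (Real.le_sqrt (by positivity) hnR.le).mpr h1
    rw [le_div_iff₀ (by positivity), one_mul]
    calc kR * δ = kR * δ / ρ * ρ := by field_simp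
      _ ≤ Real.sqrt n * ρ := mul_le_mul_of_nonneg_right h4 hρpos.le
      _ = ρ * Real.sqrt n := mul_comm _ _
  set δn : ℝ := δ / Real.sqrt n with hδn
  have hδnpos : 0 < δn := by rw [hδn]; positivity
  set L : ℕ := ⌊ρ * Real.sqrt n / (kR * δ)⌋₊ with hLdef
  have hL1 : 1 ≤ L := Nat.le_floor (by exact_mod_cast hxge)
  have hLpos : (0:ℝ) < (L:ℝ) := by exact_mod_cast Nat.lt_of_lt_of_le Nat.zero_lt_one hL1
  have hLup : (L : ℝ) ≤ ρ * Real.sqrt n / (kR * δ) := Nat.floor_le (by positivity)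
  have hLlow : ρ * Real.sqrt n / (kR * δ) / 2 ≤ (L : ℝ) := by
    have h1 := Nat.lt_floor_add_one (ρ * Real.sqrt n / (kR * δ))
    have h2 : (1 : ℝ) ≤ (L : ℝ) := by exact_mod_cast hL1
    rw [← hLdef] at h1
    linarith
  have hkey : δn * (kR * L) ≤ ρ := by
    rw [hδn]
    calc δ / Real.sqrt n * (kR * L)
        ≤ δ / Real.sqrt n * (kR * (ρ * Real.sqrt n / (kR * δ))) := by
          apply mul_le_mul_of_nonneg_left (mul_le_mul_of_nonneg_left hLup hkRpos.le)
          positivity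
      _ = ρ := by field_simp
  -- the codewords
  set f0 : Fin (ℓ + 1) → ℝ := fun y => ∑ x, (1 / kR) * W x y with hf0
  set aV : (Fin ℓ → Fin L) → Fin (ℓ + 1) → ℝ := fun v =>
    Fin.lastCases (-(δn * ∑ j, ((v j : ℕ) : ℝ))) (fun j => δn * ((v j : ℕ) : ℝ)) with haV
  set fC : (Fin ℓ → Fin L) → Fin (ℓ + 1) → ℝ := fun v y => f0 y + aV v y with hfC
  set pC : (Fin ℓ → Fin L) → Fin (ℓ + 1) → ℝ := fun v x => ∑ y, fC v y * V y x with hpC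
  have haV_cast : ∀ v j, aV v (Fin.castSucc j) = δn * ((v j : ℕ) : ℝ) := by
    intro v j; rw [haV]; exact Fin.lastCases_castSucc j
  have haV_last : ∀ v, aV v (Fin.last ℓ) = -(δn * ∑ j, ((v j : ℕ) : ℝ)) := by
    intro v; rw [haV]; exact Fin.lastCases_last
  have haV_sum : ∀ v, ∑ y, aV v y = 0 := by
    intro v
    rw [Fin.sum_univ_castSucc]
    simp only [haV_cast, haV_last]
    rw [← Finset.mul_sum]
    ring
  have hvle : ∀ (v : Fin ℓ → Fin L) j, ((v j : ℕ) : ℝ) ≤ (L : ℝ) := by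
    intro v j; exact_mod_cast (v j).2.le
  have haV_bd : ∀ v y, |aV v y| ≤ ρ := by
    intro v y
    induction y using Fin.lastCases with
    | last =>
      rw [haV_last, abs_neg, abs_of_nonneg (by positivity)]
      have hs1 : ∑ j, ((v j : ℕ) : ℝ) ≤ (ℓ : ℝ) * L := by
        calc ∑ j, ((v j : ℕ) : ℝ) ≤ ∑ _j : Fin ℓ, (L : ℝ) :=
              Finset.sum_le_sum fun j _ => hvle v j
          _ = (ℓ : ℝ) * L := by simp [Finset.sum_const, Finset.card_univ, mul_comm]
      calc δn * ∑ j, ((v j : ℕ) : ℝ) ≤ δn * ((ℓ : ℝ) * L) :=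
            mul_le_mul_of_nonneg_left hs1 hδnpos.le
        _ ≤ δn * (kR * L) := by
            apply mul_le_mul_of_nonneg_left ?_ hδnpos.le
            apply mul_le_mul_of_nonneg_right ?_ (Nat.cast_nonneg L)
            rw [hkR1]; linarith
        _ ≤ ρ := hkey
    | cast j =>
      rw [haV_cast, abs_of_nonneg (by positivity)]
      calc δn * ((v j : ℕ) : ℝ) ≤ δn * (L : ℝ) :=
            mul_le_mul_of_nonneg_left (hvle v j) hδnpos.le
        _ ≤ δn * (kR * L) := by
            apply mul_le_mul_of_nonneg_left ?_ hδnpos.le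
            exact le_mul_of_one_le_left (Nat.cast_nonneg L) hkRge1
        _ ≤ ρ := hkey
  have hf0sum : ∑ y, f0 y = 1 := by
    rw [hf0, Finset.sum_comm]
    calc ∑ x : Fin (ℓ+1), ∑ y : Fin (ℓ+1), (1 / kR) * W x y
        = ∑ _x : Fin (ℓ+1), (1 / kR) := by
          apply Finset.sum_congr rfl; intro x _
          rw [← Finset.mul_sum, hrow x, mul_one]
      _ = ((ℓ+1 : ℕ) : ℝ) * (1 / kR) := by
          simp [Finset.sum_const, Finset.card_univ]
      _ = 1 := by rw [← hkR]; field_simp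
  have hfCsum : ∀ v, ∑ y, fC v y = 1 := by
    intro v
    rw [hfC]
    rw [Finset.sum_add_distrib, hf0sum, haV_sum]
    ring
  have hpC_eq : ∀ v x, pC v x = 1 / kR + ∑ y, aV v y * V y x := by
    intro v x
    rw [hpC]
    simp only [hfC]
    rw [show (∑ y, (f0 y + aV v y) * V y x)
        = (∑ y, f0 y * V y x) + ∑ y, aV v y * V y x by
      rw [← Finset.sum_add_distrib]; apply Finset.sum_congr rfl; intros; ring]
    congr 1
    calc ∑ y, f0 y * V y x = ∑ y, ∑ x', (1 / kR) * W x' y * V y x := by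
          apply Finset.sum_congr rfl; intro y _
          rw [hf0, Finset.sum_mul]
      _ = ∑ x', (1 / kR) * ∑ y, W x' y * V y x := by
          rw [Finset.sum_comm]
          apply Finset.sum_congr rfl; intro x' _
          rw [Finset.mul_sum]
          apply Finset.sum_congr rfl; intros; ring
      _ = ∑ x', (1 / kR) * (1 : Matrix (Fin (ℓ+1)) (Fin (ℓ+1)) ℝ) x' x := by
          apply Finset.sum_congr rfl; intro x' _
          rw [← Matrix.mul_apply, hWV]
      _ = 1 / kR := by
          simp [Matrix.one_apply, Finset.sum_ite_eq']
  have hpC_nonneg : ∀ v x, 0 ≤ pC v x := by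
    intro v x
    rw [hpC_eq]
    have h1 : |∑ y, aV v y * V y x| ≤ ρ * B := by
      calc |∑ y, aV v y * V y x| ≤ ∑ y, |aV v y * V y x| := Finset.abs_sum_le_sum_abs _ _
        _ ≤ ∑ y, ρ * |V y x| := by
            apply Finset.sum_le_sum; intro y _
            rw [abs_mul]
            exact mul_le_mul_of_nonneg_right (haV_bd v y) (abs_nonneg _)
        _ = ρ * ∑ y, |V y x| := by rw [Finset.mul_sum]
        _ ≤ ρ * B := mul_le_mul_of_nonneg_left (hVcol x) hρpos.le
    have h2 : ρ * B = 1 / kR := by rw [hρ]; field_simp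
    have h3 := (abs_le.mp h1).1
    rw [h2] at h3
    linarith
  have hpC_sum : ∀ v, ∑ x, pC v x = 1 := by
    intro v
    rw [hpC, Finset.sum_comm]
    calc ∑ y, ∑ x, fC v y * V y x = ∑ y, fC v y * ∑ x, V y x := by
          apply Finset.sum_congr rfl; intros; rw [Finset.mul_sum]
      _ = ∑ y, fC v y := by
          apply Finset.sum_congr rfl; intro y _; rw [hVrow y, mul_one]
      _ = 1 := hfCsum v
  have hfC_img : ∀ v y, fC v y = ∑ x, pC v x * W x y := by
    intro v y
    have hp : pC v = Matrix.vecMul (fC v) V := by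
      funext x; rw [hpC]; simp [Matrix.vecMul, dotProduct]
    have h1 : Matrix.vecMul (pC v) W = fC v := by
      rw [hp, Matrix.vecMul_vecMul, hVW, Matrix.vecMul_one]
    have h2 := congrFun h1 y
    simpa [Matrix.vecMul, dotProduct] using h2.symm
  have hfC_nonneg : ∀ v y, 0 ≤ fC v y := by
    intro v y
    rw [hfC_img]
    exact Finset.sum_nonneg fun x _ => mul_nonneg (hpC_nonneg v x) (hpos x y).le
  -- the code
  set M : ℕ := L ^ ℓ with hM
  have hM1 : 1 ≤ M := Nat.one_le_pow _ _ (by omega)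
  set eqv : (Fin ℓ → Fin L) ≃ Fin (L ^ ℓ) := finFunctionFinEquiv with heqv
  set Ncnt : Fin (ℓ+1) → (Fin n → Fin (ℓ+1)) → ℝ :=
    fun x s => ∑ i, if s i = x then (1 : ℝ) else 0 with hNcnt
  set dec : (Fin n → Fin (ℓ+1)) → (Fin ℓ → Fin L) := fun s j =>
    if h : 0 ≤ ⌊(Ncnt (Fin.castSucc j) s / (n : ℝ) - f0 (Fin.castSucc j)) / δn + 1/2⌋ ∧
        ⌊(Ncnt (Fin.castSucc j) s / (n : ℝ) - f0 (Fin.castSucc j)) / δn + 1/2⌋ < (L : ℤ)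
    then ⟨(⌊(Ncnt (Fin.castSucc j) s / (n : ℝ) - f0 (Fin.castSucc j)) / δn + 1/2⌋).toNat, by omega⟩
    else ⟨0, by omega⟩ with hdecdef
  have hdec : ∀ (v : Fin ℓ → Fin L) (s : Fin n → Fin (ℓ+1)),
      (∀ j : Fin ℓ, |Ncnt (Fin.castSucc j) s / n - fC v (Fin.castSucc j)| < δn / 2) →
      dec s = v := by
    intro v s hclose
    funext j
    have hfv : fC v (Fin.castSucc j) = f0 (Fin.castSucc j) + δn * ((v j : ℕ) : ℝ) := by
      rw [hfC]; simp only; rw [haV_cast]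
    have h1 : |(Ncnt (Fin.castSucc j) s / n - f0 (Fin.castSucc j)) / δn - ((v j : ℕ) : ℝ)|
        < 1 / 2 := by
      have hc := hclose j
      rw [hfv] at hc
      have heq : (Ncnt (Fin.castSucc j) s / n - f0 (Fin.castSucc j)) / δn - ((v j : ℕ) : ℝ)
          = (Ncnt (Fin.castSucc j) s / n - (f0 (Fin.castSucc j) + δn * ((v j : ℕ) : ℝ))) / δn := by
        field_simp; ring
      rw [heq, abs_div, abs_of_pos hδnpos, div_lt_iff₀ hδnpos]
      linarith
    obtain ⟨ha, hb⟩ := abs_lt.mp h1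
    have hfloor : ⌊(Ncnt (Fin.castSucc j) s / (n : ℝ) - f0 (Fin.castSucc j)) / δn + 1/2⌋
        = ((v j : ℕ) : ℤ) := by
      rw [Int.floor_eq_iff]
      constructor
      · push_cast; linarith
      · push_cast; linarith
    rw [hdecdef]
    simp only [hfloor]
    rw [dif_pos ⟨Int.ofNat_nonneg _, by exact_mod_cast (v j).2⟩]
    apply Fin.ext
    simp
  refine ⟨M, hM1, fun m => WithLp.toLp 2 (fC (eqv.symm m)), fun m => ?_, fun s => eqv (dec s), ?_, ?_⟩
  · -- membership in Δs
    rw [hΔs]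
    exact ⟨WithLp.toLp 2 (pC (eqv.symm m)), by rw [hΔ]; exact ⟨hpC_nonneg _, hpC_sum _⟩, hfC_img (eqv.symm m)⟩
  · -- average error
    have herr : ∀ m : Fin M, prodProb (fC (eqv.symm m)) n {s | eqv (dec s) ≠ m} ≤ ε := by
      intro m
      set v := eqv.symm m with hv
      have hsub : {s | eqv (dec s) ≠ m} ⊆
          ⋃ j : Fin ℓ, {s | δn / 2 ≤ |Ncnt (Fin.castSucc j) s / n - fC v (Fin.castSucc j)|} := by
        intro s hs
        by_contra hout
        simp only [Set.mem_iUnion, Set.mem_setOf_eq, not_exists, not_le] at hout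
        apply hs
        show eqv (dec s) = m
        rw [hdec v s hout, hv, Equiv.apply_symm_apply]
      have hδn2 : (δn / 2) ^ 2 = δ ^ 2 / (4 * n) := by
        rw [hδn, div_pow, div_pow, Real.sq_sqrt hnR.le]
        ring
      calc prodProb (fC v) n {s | eqv (dec s) ≠ m}
          ≤ prodProb (fC v) n
            (⋃ j : Fin ℓ, {s | δn / 2 ≤ |Ncnt (Fin.castSucc j) s / n - fC v (Fin.castSucc j)|}) :=
            prodProb_mono _ (hfC_nonneg v) hsub
        _ ≤ ∑ j : Fin ℓ, prodProb (fC v) n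
              {s | δn / 2 ≤ |Ncnt (Fin.castSucc j) s / n - fC v (Fin.castSucc j)|} :=
            prodProb_iUnion_le _ (hfC_nonneg v) _
        _ ≤ ∑ _j : Fin ℓ, 1 / (4 * n * (δn / 2) ^ 2) := by
            apply Finset.sum_le_sum
            intro j _
            have hch := chebyshev (Nat.lt_of_lt_of_le Nat.zero_lt_one hn1) (fC v)
              (hfC_nonneg v) (hfCsum v) (Fin.castSucc j) (δn / 2) (by positivity)
            simpa [hNcnt] using hch
        _ = (ℓ : ℝ) * (1 / (4 * n * (δn / 2) ^ 2)) := by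
            simp [Finset.sum_const, Finset.card_univ, mul_comm]
        _ ≤ ε := by
            rw [hδn2]
            have h4 : 4 * (n : ℝ) * (δ ^ 2 / (4 * n)) = δ ^ 2 := by field_simp
            rw [h4, hδsq, one_div_div]
            have hℓk : (ℓ : ℝ) ≤ kR := by rw [hkR1]; linarith
            calc (ℓ : ℝ) * (ε / kR) ≤ kR * (ε / kR) :=
                  mul_le_mul_of_nonneg_right hℓk (by positivity)
              _ = ε := by field_simp
    calc (1 / (M : ℝ)) * ∑ m : Fin M, prodProb (fC (eqv.symm m)) n {y | eqv (dec y) ≠ m}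
        ≤ (1 / (M : ℝ)) * ∑ _m : Fin M, ε := by
          apply mul_le_mul_of_nonneg_left (Finset.sum_le_sum fun m _ => herr m)
          positivity
      _ = ε := by
          rw [Finset.sum_const, Finset.card_univ, Fintype.card_fin, nsmul_eq_mul]
          have hMne : (M : ℝ) ≠ 0 := Nat.cast_ne_zero.mpr (by omega)
          field_simp
  · -- log bound
    have hkRm1 : kR - 1 = (ℓ : ℝ) := by rw [hkR1]; ring
    have hlogM : Real.logb 2 (M : ℝ) = (ℓ : ℝ) * Real.logb 2 (L : ℝ) := by
      rw [hM]; push_cast; rw [Real.logb_pow]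
    by_cases hc : cval = 0
    · rw [hc, div_zero, Real.logb_zero, mul_zero, zero_add, hθ, if_pos hc, hlogM]
      have h0 : 0 ≤ Real.logb 2 (L : ℝ) := Real.logb_nonneg one_lt_two (by exact_mod_cast hL1)
      have h1 : 0 ≤ (ℓ : ℝ) * Real.logb 2 (L : ℝ) := mul_nonneg (Nat.cast_nonneg ℓ) h0
      linarith
    · rw [hθ, if_neg hc, Real.logb_div (ne_of_gt hsq) hc, hkRm1, hlogM]
      have hq : (0 : ℝ) < ρ / (2 * kR * δ) := by positivity
      have hmono : Real.logb 2 (Real.sqrt n * (ρ / (2 * kR * δ))) ≤ Real.logb 2 (L : ℝ) := by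
        apply (Real.logb_le_logb one_lt_two (by positivity) hLpos).mpr
        calc Real.sqrt n * (ρ / (2 * kR * δ)) = ρ * Real.sqrt n / (kR * δ) / 2 := by ring
          _ ≤ (L : ℝ) := hLlow
      rw [Real.logb_mul (ne_of_gt hsq) (ne_of_gt hq)] at hmono
      have h2 := mul_le_mul_of_nonneg_left hmono (Nat.cast_nonneg (α := ℝ) ℓ)
      ring_nf
      ring_nf at h2
      linarith
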